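/- Consequently, there are no points a_0,a_1,b_0,b_1,c_0,c_1 in R^d and reals β_1 < β_0 such that ||( a_i + b_j)/2 - c_k||_2 = β_1 when i=j=k=1 and = β_0 otherwise, for all i,j,k in {0,1}. -/

import Mathlib

/-- there are no points a_0,a_1,b_0,b_1,c_0,c_1 ∈ ℝ^d and reals β₁ < β₀ with
‖(a_i+b_j)/2 - c_k‖₂ = β₁ when i=j=k=1 and = β₀ otherwise. -/
theorem no_midpoint_and_gadget_euclidean :
    ¬ ∃ (d : ℕ) (a b c : Fin 2 → EuclideanSpace ℝ (Fin d)) (β₁ β₀ : ℝ),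
      β₁ < β₀ ∧ ∀ i j k : Fin 2,
        ‖(2 : ℝ)⁻¹ • (a i + b j) - c k‖
          = if i = 1 ∧ j = 1 ∧ k = 1 then β₁ else β₀ := by
  rintro ⟨d, a, b, c, β₁, β₀, hlt, h⟩
  -- expand squared norms
  have expand : ∀ i j k : Fin 2,
      ‖(2 : ℝ)⁻¹ • (a i + b j) - c k‖ ^ 2
        = ‖(2 : ℝ)⁻¹ • (a i + b j)‖ ^ 2
          - 2 * ((2 : ℝ)⁻¹ * ((inner ℝ (a i) (c k) : ℝ) + (inner ℝ (b j) (c k) : ℝ)))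
          + ‖c k‖ ^ 2 := by
    intro i j k
    rw [norm_sub_sq_real, real_inner_smul_left, inner_add_left]
  have hsq : ∀ i j k : Fin 2,
      ‖(2 : ℝ)⁻¹ • (a i + b j) - c k‖ ^ 2
        = (if i = 1 ∧ j = 1 ∧ k = 1 then β₁ else β₀) ^ 2 := by
    intro i j k; rw [h]
  have hβ₁ : 0 ≤ β₁ := by
    have := h 1 1 1
    simp only [and_self, if_true, eq_self_iff_true] at this
    rw [← this]; exact norm_nonneg _
  have e000 := (expand 0 0 0).symm.trans (hsq 0 0 0)
  have e001 := (expand 0 0 1).symm.trans (hsq 0 0 1)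
  have e010 := (expand 0 1 0).symm.trans (hsq 0 1 0)
  have e011 := (expand 0 1 1).symm.trans (hsq 0 1 1)
  have e100 := (expand 1 0 0).symm.trans (hsq 1 0 0)
  have e101 := (expand 1 0 1).symm.trans (hsq 1 0 1)
  have e110 := (expand 1 1 0).symm.trans (hsq 1 1 0)
  have e111 := (expand 1 1 1).symm.trans (hsq 1 1 1)
  norm_num at e000 e001 e010 e011 e100 e101 e110 e111
  nlinarith [e000, e001, e010, e011, e100, e101, e110, e111, hβ₁, hlt]
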